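/- Weak-type maximal function selection: if (f_n) is a sequence of continuous nonnegative functions on [0,1] with ∫₀¹ f_n(t) dt → 0, and (g_n) is a uniformly bounded sequence of continuous real-valued functions on [0,1] with limsup_n ∫₀¹ g_n(t) dt ≤ 0, then there exist t_n ∈ [0,1] such that Mf_n(t_n) → 0 and limsup_n g_n(t_n) ≤ 0, where Mf(τ) = sup over subintervals I ⊆ [0,1] containing τ of (1/|I|)∫_I f(t) dt. -/

import Mathlib

open Filter MeasureTheory Set
open scoped ENNReal

lemma weak_bound (f : ℝ → ℝ) (hc : ContinuousOn f (Set.Icc 0 1))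
    (h0 : ∀ t ∈ Set.Icc (0:ℝ) 1, 0 ≤ f t) (α : ℝ) (hα : 0 < α) :
    ∃ U : Set ℝ, MeasurableSet U ∧
      ({τ : ℝ | ∃ t₁ t₂ : ℝ, 0 ≤ t₁ ∧ t₂ ≤ 1 ∧ t₁ < t₂ ∧ τ ∈ Set.Icc t₁ t₂ ∧
        α < (t₂ - t₁)⁻¹ * ∫ s in t₁..t₂, f s} ⊆ U) ∧
      volume U ≤ ENNReal.ofReal (4 * α⁻¹ * ∫ s in (0:ℝ)..1, f s) := by
  classical
  set T : Set (ℝ × ℝ) := {p | 0 ≤ p.1 ∧ p.2 ≤ 1 ∧ p.1 < p.2 ∧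
    α < (p.2 - p.1)⁻¹ * ∫ s in p.1..p.2, f s} with hT
  set x : ℝ × ℝ → ℝ := fun p => (p.1 + p.2) / 2 with hx
  set r : ℝ × ℝ → ℝ := fun p => (p.2 - p.1) / 2 with hr
  have hball : ∀ p : ℝ × ℝ, Metric.closedBall (x p) (r p) = Set.Icc p.1 p.2 := by
    intro p
    rw [Real.closedBall_eq_Icc]
    congr 1 <;> simp only [hx, hr] <;> ring
  have hrR : ∀ p ∈ T, r p ≤ 1 := by
    rintro ⟨t₁, t₂⟩ ⟨h1, h2, h3, _⟩
    simp only [hr]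
    nlinarith
  obtain ⟨u, huT, hdisj, hcov⟩ :=
    Vitali.exists_disjoint_subfamily_covering_enlargement_closedBall T x r 1 hrR 4 (by norm_num)
  have humem : ∀ b ∈ u, 0 ≤ b.1 ∧ b.2 ≤ 1 ∧ b.1 < b.2 ∧
      α * (b.2 - b.1) < ∫ s in b.1..b.2, f s := by
    rintro b hb
    obtain ⟨h1, h2, h3, h4⟩ := huT hb
    refine ⟨h1, h2, h3, ?_⟩
    have h5 : 0 < b.2 - b.1 := by linarith
    calc α * (b.2 - b.1) < ((b.2 - b.1)⁻¹ * ∫ s in b.1..b.2, f s) * (b.2 - b.1) :=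
          mul_lt_mul_of_pos_right h4 h5
      _ = ∫ s in b.1..b.2, f s := by field_simp
  have hIccsub : ∀ b ∈ u, Set.Icc b.1 b.2 ⊆ Set.Icc (0:ℝ) 1 := by
    intro b hb
    obtain ⟨h1, h2, _, _⟩ := humem b hb
    exact Set.Icc_subset_Icc h1 h2
  -- countability of u
  have hcount : u.Countable := by
    have hfin : volume (⋃ b : u, Metric.closedBall (x b) (r b)) ≠ (⊤ : ℝ≥0∞) := by
      have hsub2 : (⋃ b : u, Metric.closedBall (x b) (r b)) ⊆ Set.Icc (0:ℝ) 1 := by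
        rintro y hy
        simp only [Set.mem_iUnion] at hy
        obtain ⟨b, hb⟩ := hy
        rw [hball] at hb
        exact hIccsub b b.2 hb
      refine ((measure_mono hsub2).trans_lt ?_).ne
      rw [Real.volume_Icc]
      exact ENNReal.ofReal_lt_top
    have hctb := MeasureTheory.Measure.countable_meas_pos_of_disjoint_of_meas_iUnion_ne_top
      (μ := volume) (As := fun b : u => Metric.closedBall (x b) (r b))
      (fun b => measurableSet_closedBall)
      (fun b c hbc => hdisj b.2 c.2 (fun h => hbc (Subtype.ext h)))
      hfin
    have hall : {i : u | 0 < volume (Metric.closedBall (x i) (r i))} = Set.univ := by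
      ext b
      simp only [Set.mem_setOf_eq, Set.mem_univ, iff_true]
      rw [hball]
      obtain ⟨_, _, h3, _⟩ := humem b b.2
      rw [Real.volume_Icc]
      exact ENNReal.ofReal_pos.2 (by linarith)
    rw [hall] at hctb
    exact Set.countable_coe_iff.1 (Set.countable_univ_iff.1 hctb)
  haveI : Countable u := hcount.to_subtype
  have hεnn : 0 ≤ ∫ s in (0:ℝ)..1, f s := intervalIntegral.integral_nonneg zero_le_one h0
  have hint01 : IntegrableOn f (Set.Icc (0:ℝ) 1) volume := hc.integrableOn_Icc
  have hIcceq : ∀ (a b : ℝ), a ≤ b → (Set.Icc a b ⊆ Set.Icc (0:ℝ) 1) →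
      ENNReal.ofReal (∫ s in a..b, f s) = ∫⁻ s in Set.Icc a b, ENNReal.ofReal (f s) := by
    intro a b hab hsub
    rw [intervalIntegral.integral_of_le hab, ← MeasureTheory.integral_Icc_eq_integral_Ioc]
    refine MeasureTheory.ofReal_integral_eq_lintegral_ofReal ((hc.mono hsub).integrableOn_Icc) ?_
    refine (ae_restrict_iff' measurableSet_Icc).2 (Filter.Eventually.of_forall ?_)
    exact fun s hs => h0 s (hsub hs)
  refine ⟨⋃ b : u, Metric.closedBall (x b) (4 * r b),
    MeasurableSet.iUnion (fun b => measurableSet_closedBall), ?_, ?_⟩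
  · rintro τ ⟨t₁, t₂, h1, h2, h3, h4, h5⟩
    obtain ⟨b, hbu, hsub⟩ := hcov (t₁, t₂) ⟨h1, h2, h3, h5⟩
    refine Set.mem_iUnion.2 ⟨⟨b, hbu⟩, hsub ?_⟩
    rw [hball]
    exact h4
  · -- the measure bound
    have h2r : ∀ b ∈ u, 2 * r b = b.2 - b.1 := by
      intro b _; simp only [hr]; ring
    have hαne : ENNReal.ofReal α ≠ 0 := by simpa using hα.not_ge
    have hkey : ∀ b : u, volume (Metric.closedBall (x b) (4 * r b)) ≤
        ENNReal.ofReal 4 * (ENNReal.ofReal α)⁻¹ *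
          ∫⁻ s in Set.Icc (b : ℝ × ℝ).1 (b : ℝ × ℝ).2, ENNReal.ofReal (f s) := by
      intro b
      obtain ⟨h1, h2, h3, h4⟩ := humem b b.2
      have hb1 : ENNReal.ofReal α * ENNReal.ofReal (2 * r b) ≤
          ∫⁻ s in Set.Icc (b : ℝ × ℝ).1 (b : ℝ × ℝ).2, ENNReal.ofReal (f s) := by
        rw [← hIcceq _ _ h3.le (hIccsub b b.2), ← ENNReal.ofReal_mul hα.le]
        refine ENNReal.ofReal_le_ofReal ?_
        rw [h2r b b.2]
        exact h4.le
      have hb2 : ENNReal.ofReal (2 * r b) ≤ (ENNReal.ofReal α)⁻¹ *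
          ∫⁻ s in Set.Icc (b : ℝ × ℝ).1 (b : ℝ × ℝ).2, ENNReal.ofReal (f s) := by
        calc ENNReal.ofReal (2 * r b)
            = (ENNReal.ofReal α)⁻¹ * (ENNReal.ofReal α * ENNReal.ofReal (2 * r b)) := by
              rw [← mul_assoc, ENNReal.inv_mul_cancel hαne ENNReal.ofReal_ne_top, one_mul]
          _ ≤ _ := mul_le_mul_right hb1 _
      calc volume (Metric.closedBall (x b) (4 * r b))
          = ENNReal.ofReal (2 * (4 * r b)) := Real.volume_closedBall _ _
        _ = ENNReal.ofReal (4 * (2 * r b)) := by ring_nf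
        _ = ENNReal.ofReal 4 * ENNReal.ofReal (2 * r b) := ENNReal.ofReal_mul (by norm_num)
        _ ≤ ENNReal.ofReal 4 * ((ENNReal.ofReal α)⁻¹ *
              ∫⁻ s in Set.Icc (b : ℝ × ℝ).1 (b : ℝ × ℝ).2, ENNReal.ofReal (f s)) :=
            mul_le_mul_right hb2 _
        _ = _ := by rw [mul_assoc]
    have hdisj' : Pairwise (Function.onFun Disjoint fun b : u => Set.Icc (b : ℝ × ℝ).1 (b : ℝ × ℝ).2) := by
      intro b c hbc
      have := hdisj b.2 c.2 (fun h => hbc (Subtype.ext h))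
      simpa only [Function.onFun, hball] using this
    have hsum : (∑' b : u, ∫⁻ s in Set.Icc (b : ℝ × ℝ).1 (b : ℝ × ℝ).2, ENNReal.ofReal (f s)) ≤
        ENNReal.ofReal (∫ s in (0:ℝ)..1, f s) := by
      rw [← MeasureTheory.lintegral_iUnion (fun b => measurableSet_Icc) hdisj']
      have hsub : (⋃ b : u, Set.Icc (b : ℝ × ℝ).1 (b : ℝ × ℝ).2) ⊆ Set.Icc (0:ℝ) 1 := by
        simp only [Set.iUnion_subset_iff]
        exact fun b => hIccsub b b.2
      calc ∫⁻ s in ⋃ b : u, Set.Icc (b : ℝ × ℝ).1 (b : ℝ × ℝ).2, ENNReal.ofReal (f s)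
          ≤ ∫⁻ s in Set.Icc (0:ℝ) 1, ENNReal.ofReal (f s) :=
            lintegral_mono' (Measure.restrict_mono hsub le_rfl) le_rfl
        _ = ENNReal.ofReal (∫ s in (0:ℝ)..1, f s) := (hIcceq 0 1 zero_le_one le_rfl).symm
    calc volume (⋃ b : u, Metric.closedBall (x b) (4 * r b))
        ≤ ∑' b : u, volume (Metric.closedBall (x b) (4 * r b)) := measure_iUnion_le _
      _ ≤ ∑' b : u, ENNReal.ofReal 4 * (ENNReal.ofReal α)⁻¹ *
            ∫⁻ s in Set.Icc (b : ℝ × ℝ).1 (b : ℝ × ℝ).2, ENNReal.ofReal (f s) :=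
          ENNReal.tsum_le_tsum hkey
      _ = ENNReal.ofReal 4 * (ENNReal.ofReal α)⁻¹ *
            ∑' b : u, ∫⁻ s in Set.Icc (b : ℝ × ℝ).1 (b : ℝ × ℝ).2, ENNReal.ofReal (f s) :=
          ENNReal.tsum_mul_left
      _ ≤ ENNReal.ofReal 4 * (ENNReal.ofReal α)⁻¹ *
            ENNReal.ofReal (∫ s in (0:ℝ)..1, f s) := mul_le_mul_right hsum _
      _ = ENNReal.ofReal (4 * α⁻¹ * ∫ s in (0:ℝ)..1, f s) := by
          rw [← ENNReal.ofReal_inv_of_pos hα, ← ENNReal.ofReal_mul (by norm_num : (0:ℝ) ≤ 4),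
            ← ENNReal.ofReal_mul (by positivity)]

theorem stmt_1 (f g : ℕ → ℝ → ℝ)
    (hf_cont : ∀ n, ContinuousOn (f n) (Set.Icc 0 1))
    (hf_nonneg : ∀ n, ∀ t ∈ Set.Icc (0:ℝ) 1, 0 ≤ f n t)
    (hf_int : Tendsto (fun n => ∫ t in (0:ℝ)..1, f n t) atTop (nhds 0))
    (C : ℝ)
    (hg_cont : ∀ n, ContinuousOn (g n) (Set.Icc 0 1))
    (hg_bdd : ∀ n, ∀ t ∈ Set.Icc (0:ℝ) 1, |g n t| ≤ C)
    (hg_limsup : limsup (fun n => ∫ t in (0:ℝ)..1, g n t) atTop ≤ 0) :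
    ∃ t : ℕ → ℝ, (∀ n, t n ∈ Set.Icc (0:ℝ) 1) ∧
      Tendsto (fun n => sSup {y : ℝ | ∃ t₁ t₂ : ℝ, 0 ≤ t₁ ∧ t₂ ≤ 1 ∧ t₁ < t₂ ∧
          t n ∈ Set.Icc t₁ t₂ ∧ y = (t₂ - t₁)⁻¹ * ∫ s in t₁..t₂, f n s})
        atTop (nhds 0) ∧
      limsup (fun n => g n (t n)) atTop ≤ 0 := by
  classical
  set ε : ℕ → ℝ := fun n => ∫ s in (0:ℝ)..1, f n s with hε
  have hεnn : ∀ n, 0 ≤ ε n := fun n =>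
    intervalIntegral.integral_nonneg zero_le_one (hf_nonneg n)
  set α : ℕ → ℝ := fun n => Real.sqrt (ε n) + 1 / (n + 1) with hα
  have hαpos : ∀ n, 0 < α n := fun n =>
    add_pos_of_nonneg_of_pos (Real.sqrt_nonneg _) (by positivity)
  choose U hUm hUsub hUvol using fun n =>
    weak_bound (f n) (hf_cont n) (hf_nonneg n) (α n) (hαpos n)
  set G : ℕ → Set ℝ := fun n => Set.Icc 0 1 \ U n with hG
  have hGm : ∀ n, MeasurableSet (G n) := fun n => measurableSet_Icc.diff (hUm n)
  set m : ℕ → ℝ := fun n => (volume (U n)).toReal with hm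
  have hm0 : ∀ n, 0 ≤ m n := fun n => ENNReal.toReal_nonneg
  have hUfin : ∀ n, volume (U n) ≠ (⊤ : ℝ≥0∞) := fun n =>
    ((hUvol n).trans_lt ENNReal.ofReal_lt_top).ne
  have hmle : ∀ n, m n ≤ 4 * Real.sqrt (ε n) := by
    intro n
    have h1 : m n ≤ 4 * (α n)⁻¹ * ε n := by
      rw [hm]
      have := ENNReal.toReal_mono (ENNReal.ofReal_ne_top) (hUvol n)
      rwa [ENNReal.toReal_ofReal (mul_nonneg (mul_nonneg (by norm_num)
        (inv_nonneg.2 (hαpos n).le)) (hεnn n))] at this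
    refine h1.trans ?_
    rcases eq_or_lt_of_le (hεnn n) with h | h
    · simp [← h]
    · have hs : 0 < Real.sqrt (ε n) := Real.sqrt_pos.2 h
      have h2 : (α n)⁻¹ ≤ (Real.sqrt (ε n))⁻¹ := by
        apply inv_anti₀ hs
        simp only [hα]
        have : (0:ℝ) < 1 / (n + 1) := by positivity
        linarith
      have h3 : 4 * (α n)⁻¹ * ε n ≤ 4 * (Real.sqrt (ε n))⁻¹ * ε n := by
        have := mul_le_mul_of_nonneg_right
          (mul_le_mul_of_nonneg_left h2 (by norm_num : (0:ℝ) ≤ 4)) (hεnn n)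
        linarith
      refine h3.trans (le_of_eq ?_)
      have hss : Real.sqrt (ε n) * Real.sqrt (ε n) = ε n := Real.mul_self_sqrt (hεnn n)
      field_simp
      nlinarith [hss]
  have hsqrt : Tendsto (fun n => Real.sqrt (ε n)) atTop (nhds 0) := by
    have h := (Real.continuous_sqrt.tendsto 0).comp hf_int
    simpa [Real.sqrt_zero, Function.comp_def] using h
  have hmten : Tendsto m atTop (nhds 0) := by
    refine tendsto_of_tendsto_of_tendsto_of_le_of_le tendsto_const_nhds ?_ hm0 hmle
    simpa using hsqrt.const_mul (4:ℝ)
  have hαten : Tendsto α atTop (nhds 0) := by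
    have h2 : Tendsto (fun n : ℕ => 1 / ((n:ℝ) + 1)) atTop (nhds 0) :=
      tendsto_one_div_add_atTop_nhds_zero_nat
    have h3 := hsqrt.add h2
    rw [hα]
    simpa using h3
  -- volume facts about G
  have hIccvol : volume (Set.Icc (0:ℝ) 1) = 1 := by
    rw [Real.volume_Icc]; norm_num
  have hGfin : ∀ n, volume (G n) ≠ (⊤ : ℝ≥0∞) := by
    intro n
    refine ((measure_mono Set.diff_subset).trans_lt ?_).ne
    rw [hIccvol]; exact ENNReal.one_lt_top
  have hGup : ∀ n, (volume (G n)).toReal ≤ 1 := by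
    intro n
    have h : volume (G n) ≤ volume (Set.Icc (0:ℝ) 1) := measure_mono Set.diff_subset
    rw [hIccvol] at h
    simpa using ENNReal.toReal_mono ENNReal.one_ne_top h
  have hGlow : ∀ n, 1 - m n ≤ (volume (G n)).toReal := by
    intro n
    have key : volume (Set.Icc (0:ℝ) 1 \ U n) + volume (Set.Icc (0:ℝ) 1 ∩ U n)
        = volume (Set.Icc (0:ℝ) 1) := measure_diff_add_inter (Set.Icc (0:ℝ) 1) (hUm n)
    rw [hIccvol] at key
    have hfin2 : volume (Set.Icc (0:ℝ) 1 ∩ U n) ≠ (⊤ : ℝ≥0∞) :=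
      ((measure_mono Set.inter_subset_right).trans_lt
        (lt_top_iff_ne_top.2 (hUfin n))).ne
    have := congrArg ENNReal.toReal key
    rw [ENNReal.toReal_add (hGfin n) hfin2] at this
    simp only [ENNReal.toReal_one] at this
    have hb : (volume (Set.Icc (0:ℝ) 1 ∩ U n)).toReal ≤ m n :=
      ENNReal.toReal_mono (hUfin n) (measure_mono Set.inter_subset_right)
    have hGeq : volume (G n) = volume (Set.Icc (0:ℝ) 1 \ U n) := rfl
    rw [hGeq]
    linarith
  -- the choice of t
  have hIntg : ∀ n, IntegrableOn (g n) (Set.Icc 0 1) volume := fun n =>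
    (hg_cont n).integrableOn_Icc
  set avg : ℕ → ℝ := fun n => ⨍ y in G n, g n y with havg
  set P : ℕ → Prop := fun n => ∃ x ∈ G n, g n x ≤ avg n with hP
  set t : ℕ → ℝ := fun n => if h : P n then h.choose else 0 with ht
  have htP : ∀ n, P n → t n ∈ G n ∧ g n (t n) ≤ avg n := by
    intro n hn
    simp only [ht, dif_pos hn]
    exact ⟨hn.choose_spec.1, hn.choose_spec.2⟩
  have htmem : ∀ n, t n ∈ Set.Icc (0:ℝ) 1 := by
    intro n
    by_cases h : P n
    · exact ((htP n h).1).1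
    · simp only [ht, dif_neg h]
      exact ⟨le_rfl, zero_le_one⟩
  have hPev : ∀ᶠ n in atTop, P n := by
    filter_upwards [Tendsto.eventually_lt_const (by norm_num : (0:ℝ) < 1/2) hmten] with n hn
    have hpos : 0 < (volume (G n)).toReal := by linarith [hGlow n]
    have hne : volume (G n) ≠ 0 := by
      intro h; rw [h] at hpos; simp at hpos
    exact MeasureTheory.exists_le_setAverage hne (hGfin n)
      ((hIntg n).mono_set Set.diff_subset)
  -- membership and boundedness of the sSup sets
  have hSmem : ∀ n, (ε n) ∈ {y : ℝ | ∃ t₁ t₂ : ℝ, 0 ≤ t₁ ∧ t₂ ≤ 1 ∧ t₁ < t₂ ∧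
      t n ∈ Set.Icc t₁ t₂ ∧ y = (t₂ - t₁)⁻¹ * ∫ s in t₁..t₂, f n s} := by
    intro n
    exact ⟨0, 1, le_rfl, le_rfl, one_pos, htmem n, by norm_num [hε]⟩
  have hSbdd : ∀ n, BddAbove {y : ℝ | ∃ t₁ t₂ : ℝ, 0 ≤ t₁ ∧ t₂ ≤ 1 ∧ t₁ < t₂ ∧
      t n ∈ Set.Icc t₁ t₂ ∧ y = (t₂ - t₁)⁻¹ * ∫ s in t₁..t₂, f n s} := by
    intro n
    obtain ⟨z, hz, hzmax⟩ := isCompact_Icc.exists_isMaxOn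
      (Set.nonempty_Icc.2 zero_le_one) (hf_cont n)
    refine ⟨f n z, ?_⟩
    rintro y ⟨t₁, t₂, h1, h2, h3, _, rfl⟩
    have hsubI : Set.Icc t₁ t₂ ⊆ Set.Icc (0:ℝ) 1 := Set.Icc_subset_Icc h1 h2
    have hcc : ContinuousOn (f n) (Set.uIcc t₁ t₂) := by
      rw [Set.uIcc_of_le h3.le]; exact (hf_cont n).mono hsubI
    have h5 : (∫ s in t₁..t₂, f n s) ≤ ∫ s in t₁..t₂, f n z :=
      intervalIntegral.integral_mono_on h3.le hcc.intervalIntegrable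
        intervalIntegrable_const (fun s hs => hzmax (hsubI hs))
    have h6 : (∫ s in t₁..t₂, (f n z : ℝ)) = (t₂ - t₁) * f n z := by
      rw [intervalIntegral.integral_const, smul_eq_mul]
    have h7 : (t₂ - t₁)⁻¹ * (∫ s in t₁..t₂, f n s) ≤ (t₂ - t₁)⁻¹ * ((t₂ - t₁) * f n z) :=
      mul_le_mul_of_nonneg_left (h5.trans_eq h6) (inv_nonneg.2 (by linarith))
    refine h7.trans (le_of_eq ?_)
    rw [← mul_assoc, inv_mul_cancel₀ (by linarith : t₂ - t₁ ≠ 0), one_mul]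
  refine ⟨t, htmem, ?_, ?_⟩
  · -- part A : maximal function tends to 0
    refine tendsto_of_tendsto_of_tendsto_of_le_of_le' tendsto_const_nhds hαten
      (Eventually.of_forall fun n => ?_) ?_
    · exact le_trans (hεnn n) (le_csSup (hSbdd n) (hSmem n))
    · filter_upwards [hPev] with n hn
      refine csSup_le ⟨ε n, hSmem n⟩ ?_
      rintro y ⟨t₁, t₂, h1, h2, h3, h4, rfl⟩
      by_contra hlt
      push_neg at hlt
      exact ((htP n hn).1).2 (hUsub n ⟨t₁, t₂, h1, h2, h3, h4, hlt⟩)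
  · -- part B : limsup of g
    have hC0 : (0:ℝ) ≤ C := le_trans (abs_nonneg _) (hg_bdd 0 0 ⟨le_rfl, zero_le_one⟩)
    have hgIbdd : IsBoundedUnder (· ≤ ·) atTop (fun n => ∫ s in (0:ℝ)..1, g n s) := by
      refine ⟨C, ?_⟩
      rw [Filter.eventually_map]
      refine Eventually.of_forall fun n => ?_
      have h : ‖∫ s in (0:ℝ)..1, g n s‖ ≤ C * |1 - 0| :=
        intervalIntegral.norm_integral_le_of_norm_le_const (fun x hx => by
          rw [Real.norm_eq_abs]
          refine hg_bdd n x ?_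
          rw [Set.uIoc_of_le zero_le_one] at hx
          exact Set.Ioc_subset_Icc_self hx)
      rw [Real.norm_eq_abs] at h
      have := (abs_le.1 (by simpa using h)).2
      simpa using this
    have hkey : ∀ δ : ℝ, 0 < δ → ∀ᶠ n in atTop, g n (t n) ≤ δ := by
      intro δ hδ
      have h1 : ∀ᶠ n in atTop, (∫ s in (0:ℝ)..1, g n s) < δ/4 :=
        eventually_lt_of_limsup_lt (lt_of_le_of_lt hg_limsup (by positivity)) hgIbdd
      have h2 : ∀ᶠ n in atTop, m n < min (1/2) (δ/(4*(C+1))) :=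
        Tendsto.eventually_lt_const (lt_min (by norm_num) (by positivity)) hmten
      filter_upwards [h1, h2, hPev] with n hn1 hn2 hnP
      obtain ⟨htG, htle⟩ := htP n hnP
      have hv1 : 1 - m n ≤ (volume (G n)).toReal := hGlow n
      have hmhalf : m n < 1/2 := lt_of_lt_of_le hn2 (min_le_left _ _)
      have hvhalf : (1:ℝ)/2 ≤ (volume (G n)).toReal := by linarith
      have hsplit : (∫ y in Set.Icc (0:ℝ) 1 ∩ U n, g n y) + (∫ y in G n, g n y)
          = ∫ y in Set.Icc (0:ℝ) 1, g n y :=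
        MeasureTheory.integral_inter_add_diff (hUm n) (hIntg n)
      have hIcc01 : (∫ y in Set.Icc (0:ℝ) 1, g n y) = ∫ s in (0:ℝ)..1, g n s := by
        rw [MeasureTheory.integral_Icc_eq_integral_Ioc,
          ← intervalIntegral.integral_of_le zero_le_one]
      have hUbound : |∫ y in Set.Icc (0:ℝ) 1 ∩ U n, g n y| ≤ C * m n := by
        have hfin2 : volume (Set.Icc (0:ℝ) 1 ∩ U n) < (⊤ : ℝ≥0∞) :=
          (measure_mono Set.inter_subset_right).trans_lt (lt_top_iff_ne_top.2 (hUfin n))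
        have hb := MeasureTheory.norm_setIntegral_le_of_norm_le_const (f := g n) (C := C) hfin2
          (fun x hx => by rw [Real.norm_eq_abs]; exact hg_bdd n x hx.1)
        rw [Real.norm_eq_abs] at hb
        refine hb.trans ?_
        exact mul_le_mul_of_nonneg_left
          (ENNReal.toReal_mono (hUfin n) (measure_mono Set.inter_subset_right)) hC0
      have hGint : (∫ y in G n, g n y) ≤ δ/4 + C * m n := by
        have h8 := (abs_le.1 hUbound).1
        have h9 : (∫ y in G n, g n y)
            = (∫ s in (0:ℝ)..1, g n s) - ∫ y in Set.Icc (0:ℝ) 1 ∩ U n, g n y := by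
          rw [← hIcc01]; linarith [hsplit]
        rw [h9]; linarith
      have hCm : C * m n ≤ δ/4 := by
        have hm2 : m n ≤ δ/(4*(C+1)) := le_of_lt (lt_of_lt_of_le hn2 (min_le_right _ _))
        have h10 : C * m n ≤ C * (δ/(4*(C+1))) := mul_le_mul_of_nonneg_left hm2 hC0
        refine h10.trans ?_
        rw [← mul_div_assoc, div_le_div_iff₀ (by positivity : (0:ℝ) < 4*(C+1))
          (by norm_num : (0:ℝ) < 4)]
        nlinarith [hδ.le, hC0]
      have havgle : avg n ≤ δ := by
        rw [havg]
        simp only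
        rw [MeasureTheory.setAverage_eq, smul_eq_mul, measureReal_def]
        rcases le_or_gt (∫ y in G n, g n y) 0 with hc0 | hc0
        · have h11 : (volume (G n)).toReal⁻¹ * (∫ y in G n, g n y) ≤ 0 :=
            mul_nonpos_of_nonneg_of_nonpos (inv_nonneg.2 ENNReal.toReal_nonneg) hc0
          linarith
        · have hinv : (volume (G n)).toReal⁻¹ ≤ 2 := by
            rw [show (2:ℝ) = ((1:ℝ)/2)⁻¹ by norm_num]
            exact inv_anti₀ (by norm_num) hvhalf
          calc (volume (G n)).toReal⁻¹ * (∫ y in G n, g n y)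
              ≤ 2 * (∫ y in G n, g n y) := mul_le_mul_of_nonneg_right hinv hc0.le
            _ ≤ 2 * (δ/4 + C * m n) := by linarith
            _ ≤ δ := by linarith
      exact htle.trans havgle
    have hcb : IsCoboundedUnder (· ≤ ·) atTop (fun n => g n (t n)) :=
      Filter.isCoboundedUnder_le_of_le atTop (x := -C)
        (fun n => (abs_le.1 (hg_bdd n (t n) (htmem n))).1)
    by_contra hcon
    push_neg at hcon
    have h12 : limsup (fun n => g n (t n)) atTop ≤ (limsup (fun n => g n (t n)) atTop)/2 :=
      Filter.limsup_le_of_le hcb (hkey _ (by linarith))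
    linarith
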